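/- Let K be a field, a ≥ 1, and let M_0, M_1, ..., M_{a−1} be N×N matrices over K. Form the aN×aN block matrix M⃗ whose (i+1, i) block is M_i for 0 ≤ i ≤ a−2, whose (0, a−1) block is M_{a−1}, and which is zero elsewhere. Then det(I − T·M⃗) = det(I − T^a · M_{a−1} ⋯ M_1 M_0) as polynomials in K[T]. -/

import Mathlib

open Matrix Polynomial

def cycBlk (R : Type*) [CommRing R] (a N : ℕ) [NeZero a]
    (M : Fin a → Matrix (Fin N) (Fin N) R) :
    Matrix (Fin a × Fin N) (Fin a × Fin N) R :=
  fun p q => if p.1 = q.1 + 1 then M q.1 p.2 q.2 else 0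

def oneEquiv (N : ℕ) : Fin N ≃ (Fin 1 × Fin N) :=
  ⟨fun r => (0, r), fun p => p.2, fun r => rfl,
    fun ⟨i, r⟩ => by simp [Subsingleton.elim (0 : Fin 1) i]⟩

def cycEquiv (a N : ℕ) : (Fin (a + 2) × Fin N) ≃ (Fin N ⊕ (Fin (a + 1) × Fin N)) where
  toFun p := if h : p.1 = 0 then Sum.inl p.2 else Sum.inr (p.1.pred h, p.2)
  invFun x := x.elim (fun r => (0, r)) (fun q => (q.1.succ, q.2))
  left_inv := by rintro ⟨i, r⟩; by_cases h : i = 0 <;> simp [h]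
  right_inv := by rintro (r | ⟨q, s⟩) <;> simp [Fin.succ_ne_zero]

lemma fin_cond_corner (a : ℕ) (q : Fin (a + 1)) :
    ((0 : Fin (a + 2)) = q.succ + 1) ↔ q = Fin.last a := by
  rw [Fin.ext_iff, Fin.ext_iff]
  simp only [Fin.val_zero, Fin.add_def, Fin.val_succ, Fin.val_one, Fin.val_last]
  by_cases h : (q : ℕ) = a
  · simp [h, Nat.mod_self]
  · have := q.isLt
    rw [Nat.mod_eq_of_lt (by omega)]
    omega

lemma fin_cond_sub (a : ℕ) (p q : Fin (a + 1)) (hq : q ≠ Fin.last a) :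
    (p.succ = q.succ + 1) ↔ p = q + 1 := by
  have hq' : (q : ℕ) < a := Fin.val_lt_last hq
  rw [Fin.ext_iff, Fin.ext_iff]
  simp only [Fin.add_def, Fin.val_succ, Fin.val_one, Fin.val_one']
  rw [Nat.mod_eq_of_lt (show (q:ℕ) + 1 + 1 < a + 2 by omega),
    Nat.mod_eq_of_lt (show 1 < a + 1 by omega),
    Nat.mod_eq_of_lt (show (q:ℕ) + 1 < a + 1 by omega)]
  omega

lemma fin_cond_last (a : ℕ) (p : Fin (a + 1)) :
    (p = Fin.last a + 1) ↔ p = 0 := by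
  rw [Fin.last_add_one]

lemma cycBlk_det {R : Type*} [CommRing R] {N : ℕ} :
    ∀ (a : ℕ) (M : Fin (a + 1) → Matrix (Fin N) (Fin N) R),
      (1 - cycBlk R (a + 1) N M).det = (1 - (List.ofFn M).reverse.prod).det := by
  intro a
  induction a with
  | zero =>
    intro M
    rw [← Matrix.det_submatrix_equiv_self (oneEquiv N) (1 - cycBlk R 1 N M)]
    congr 1
    ext r s
    simp only [Matrix.submatrix_apply, oneEquiv, Equiv.coe_fn_mk]
    simp [cycBlk, Matrix.one_apply, Prod.ext_iff, Subsingleton.elim ((0:Fin 1)+1) 0,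
      List.ofFn_succ]
  | succ a ih =>
    intro M
    set c : Matrix (Fin N) (Fin N) R := M 0 * M (Fin.last (a + 1)) with hc
    set g : Fin (a + 1) → Matrix (Fin N) (Fin N) R :=
      Fin.snoc (fun p : Fin a => M p.succ.castSucc) c with hgdef
    have hg : ∀ q : Fin (a + 1), q ≠ Fin.last a → g q = M q.succ := by
      intro q hq
      have : q = (q.castPred hq).castSucc := by simp
      rw [this, hgdef, Fin.snoc_castSucc, Fin.succ_castSucc]
    have hglast : g (Fin.last a) = c := by rw [hgdef, Fin.snoc_last]
    -- block decomposition
    set Bt : Matrix (Fin N) (Fin (a + 1) × Fin N) R :=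
      fun r qs => -(if qs.1 = Fin.last a then M (Fin.last (a + 1)) r qs.2 else 0) with hBt
    set Cb : Matrix (Fin (a + 1) × Fin N) (Fin N) R :=
      fun ps s => -(if ps.1 = 0 then M 0 ps.2 s else 0) with hCb
    set D0 : Matrix (Fin (a + 1) × Fin N) (Fin (a + 1) × Fin N) R :=
      fun p q => if p.1.succ = q.1.succ + 1 then M q.1.succ p.2 q.2 else 0 with hD0
    have hsub : (1 - cycBlk R (a + 2) N M).submatrix (cycEquiv a N).symm (cycEquiv a N).symm
        = Matrix.fromBlocks 1 Bt Cb (1 - D0) := by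
      ext x y
      rcases x with r | ⟨p, r⟩ <;> rcases y with s | ⟨q, s⟩ <;>
        simp only [Matrix.fromBlocks_apply₁₁, Matrix.fromBlocks_apply₁₂,
          Matrix.fromBlocks_apply₂₁, Matrix.fromBlocks_apply₂₂, Matrix.sub_apply] <;>
        simp only [Matrix.submatrix_apply, cycEquiv, Equiv.coe_fn_symm_mk, Sum.elim_inl,
          Sum.elim_inr, Matrix.fromBlocks_apply₁₁, Matrix.fromBlocks_apply₁₂,
          Matrix.fromBlocks_apply₂₁, Matrix.fromBlocks_apply₂₂, Matrix.sub_apply,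
          Matrix.one_apply, cycBlk, hBt, hCb, hD0, Prod.ext_iff]
      · have : ¬ ((0 : Fin (a + 2)) = 0 + 1) := by
          rw [zero_add]; exact (Fin.zero_eq_one_iff (n := a + 2)).not.mpr (by omega)
        simp [this]
      · have h2 : ¬ ((0 : Fin (a+2)) = q.succ) := fun h => (Fin.succ_ne_zero q) h.symm
        rw [if_neg (by simp [h2])]
        simp only [fin_cond_corner a q]
        by_cases h : q = Fin.last a
        · simp [h, Fin.succ_last]
        · simp [h]
      · have h2 : ¬ (p.succ = 0 ∧ r = s) := fun h => (Fin.succ_ne_zero p) h.1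
        have h3 : (p.succ = (0 : Fin (a+2)) + 1) ↔ p = 0 := by
          rw [zero_add]
          constructor
          · intro h; exact Fin.succ_injective _ (by simpa using h)
          · rintro rfl; rfl
        rw [if_neg h2]
        simp only [h3]
        by_cases h : p = 0 <;> simp [h]
      · have h4 : ((p.succ, r) = (q.succ, s)) ↔ ((p, r) = (q, s)) := by
          simp [Prod.ext_iff, Fin.succ_inj]
        simp only [Prod.mk.injEq, Fin.succ_inj]
    have hCB : Cb * Bt = fun ps qs =>
        if ps.1 = 0 ∧ qs.1 = Fin.last a then c ps.2 qs.2 else 0 := by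
      ext ⟨p, r⟩ ⟨q, s⟩
      rw [Matrix.mul_apply]
      simp only [Matrix.mul_apply, hBt, hCb, hc, neg_mul_neg, ite_mul, mul_ite, zero_mul,
        mul_zero]
      by_cases hp : p = 0 <;> by_cases hq : q = Fin.last a <;>
        simp [hp, hq, Matrix.mul_apply]
    have hD : (1 - D0) - Cb * Bt = 1 - cycBlk R (a + 1) N g := by
      ext ⟨p, r⟩ ⟨q, s⟩
      simp only [Matrix.sub_apply]
      rw [hCB]
      simp only [Matrix.sub_apply, cycBlk, hD0]
      by_cases hq : q = Fin.last a
      · subst hq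
        have h1 : ¬ (p.succ = (Fin.last a).succ + 1) := by
          rw [Fin.succ_last, Fin.last_add_one]; exact Fin.succ_ne_zero p
        rw [if_neg h1]
        simp only [fin_cond_last]
        by_cases hp : p = 0 <;> simp [hp, hglast]
      · simp only [fin_cond_sub a p q hq, hg q hq]
        simp [hq]
    rw [← Matrix.det_submatrix_equiv_self (cycEquiv a N).symm, hsub,
      Matrix.det_fromBlocks_one₁₁, hD, ih g]
    -- now the list product manipulations
    have hofg : (List.ofFn g).reverse.prod
        = c * (List.ofFn fun p : Fin a => M p.succ.castSucc).reverse.prod := by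
      rw [hgdef, List.ofFn_succ']
      simp [List.reverse_concat, List.prod_cons, Fin.snoc_castSucc, Fin.snoc_last]
    have hofM : (List.ofFn M).reverse.prod
        = ((List.ofFn fun i : Fin (a + 1) => M i.succ).reverse.prod) * M 0 := by
      rw [List.ofFn_succ]
      simp only [List.reverse_cons, List.prod_append, List.prod_cons, List.prod_nil, mul_one]
    have hofM2 : (List.ofFn fun i : Fin (a + 1) => M i.succ).reverse.prod
        = M (Fin.last (a + 1)) * (List.ofFn fun p : Fin a => M p.succ.castSucc).reverse.prod := by
      rw [List.ofFn_succ' (fun i : Fin (a + 1) => M i.succ)]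
      simp [List.reverse_concat, List.prod_cons, Fin.succ_last]
    rw [hofg, hofM, hofM2, hc, mul_assoc, Matrix.det_one_sub_mul_comm]

lemma smul_list_prod {R : Type*} [CommRing R] {N : ℕ} (r : R)
    (l : List (Matrix (Fin N) (Fin N) R)) :
    (l.map (fun A => r • A)).prod = r ^ l.length • l.prod := by
  induction l with
  | nil => simp
  | cons h t ih =>
    simp only [List.map_cons, List.prod_cons, ih, List.length_cons]
    rw [Matrix.smul_mul, Matrix.mul_smul, smul_smul, pow_succ, mul_comm]

/-- Let `K` be a field, `a ≥ 1`, and `M₀, …, M_{a−1}` be `N×N` matrices over `K`.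
For the `aN × aN` block matrix `B` whose `(i+1, i)` block is `Mᵢ` (indices mod `a`,
so the `(0, a−1)` block is `M_{a−1}`) and which vanishes elsewhere,
`det(I − T·B) = det(I − Tᵃ · M_{a−1} ⋯ M₁ M₀)` in `K[T]`. -/
theorem block_cyclic_det (K : Type*) [Field K] (a N : ℕ) [NeZero a]
    (M : Fin a → Matrix (Fin N) (Fin N) K)
    (B : Matrix (Fin a × Fin N) (Fin a × Fin N) K)
    (hB : ∀ (i j : Fin a) (r s : Fin N),
      B (i, r) (j, s) = if i = j + 1 then M j r s else 0) :
    Matrix.det (1 - (Polynomial.X : Polynomial K) • B.map Polynomial.C) =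
      Matrix.det (1 - ((Polynomial.X : Polynomial K) ^ a) •
        ((List.ofFn M).reverse.prod).map Polynomial.C) := by
  rcases Nat.exists_eq_succ_of_ne_zero (NeZero.ne a) with ⟨a', rfl⟩
  have hBc : (Polynomial.X : Polynomial K) • B.map Polynomial.C
      = cycBlk (Polynomial K) (a' + 1) N (fun i => (Polynomial.X : Polynomial K) • (M i).map Polynomial.C) := by
    ext ⟨i, r⟩ ⟨j, s⟩
    simp only [Matrix.smul_apply, Matrix.map_apply, cycBlk, hB i j r s, apply_ite Polynomial.C,
      map_zero, smul_ite, smul_zero, smul_eq_mul, mul_ite, mul_zero]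
  rw [hBc, cycBlk_det]
  congr 2
  have h1 : (List.ofFn fun i => (Polynomial.X : Polynomial K) • (M i).map Polynomial.C)
      = (List.ofFn fun i => (M i).map Polynomial.C).map
          (fun A => (Polynomial.X : Polynomial K) • A) := by
    rw [List.map_ofFn]; rfl
  rw [h1, ← List.map_reverse, smul_list_prod]
  have h2 : ((List.ofFn fun i => (M i).map Polynomial.C).reverse).length = a' + 1 := by simp
  rw [h2]
  congr 1
  have h3 : (List.ofFn fun i => (M i).map Polynomial.C)
      = (List.ofFn M).map (fun A => A.map Polynomial.C) := by
    rw [List.map_ofFn]; rfl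
  rw [h3, ← List.map_reverse]
  exact (map_list_prod (Polynomial.C.mapMatrix : Matrix (Fin N) (Fin N) K →+* _)
    ((List.ofFn M).reverse)).symm ▸ rfl
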